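/- Let G be a stable weighted multigraph of genus g and let d be a multidegree of total degree g − 1 on G. Then d is semistable if and only if d is orientable, i.e., there exists an orientation O of G with d = d_O. -/

import Mathlib

open Finset

/-- A multigraph on vertex type `V` with edge type `E`: each edge `e` joins the
(possibly equal) vertices `fst e` and `snd e` (loops and multiple edges allowed). -/
structure Multigraph (V E : Type) where
  fst : E → V
  snd : E → V

/-- An orientation of a multigraph: each edge gets a tail and a head, which are its
two endpoints (in one of the two possible orders). -/
structure GraphOrientation {V E : Type} (G : Multigraph V E) where
  tail : E → V
  head : E → V
  compat : ∀ e, (tail e = G.fst e ∧ head e = G.snd e) ∨ (tail e = G.snd e ∧ head e = G.fst e)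

variable {V E : Type} [Fintype V] [Fintype E] [DecidableEq V] [DecidableEq E]

namespace Multigraph

/-- `E(S)`: the set of edges with both endpoints in `S`. -/
def edgesIn (G : Multigraph V E) (S : Finset V) : Finset E :=
  univ.filter fun e => G.fst e ∈ S ∧ G.snd e ∈ S

/-- Membership in the cut of `S`: exactly one endpoint of `e` lies in `S`. -/
def InCut (G : Multigraph V E) (S : Finset V) (e : E) : Prop :=
  (G.fst e ∈ S ∧ G.snd e ∉ S) ∨ (G.fst e ∉ S ∧ G.snd e ∈ S)

instance (G : Multigraph V E) (S : Finset V) : DecidablePred (G.InCut S) := fun e =>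
  decidable_of_iff ((G.fst e ∈ S ∧ G.snd e ∉ S) ∨ (G.fst e ∉ S ∧ G.snd e ∈ S)) Iff.rfl

/-- `ε(S)`: the number of edges with exactly one endpoint in `S`. -/
def cutCard (G : Multigraph V E) (S : Finset V) : ℕ :=
  (univ.filter fun e => G.InCut S e).card

/-- The genus `g(S) = |E(S)| - |S| + 1 + Σ_{v ∈ S} g_v` of a subset of vertices,
for the vertex weight function `w`. -/
def genusOf (G : Multigraph V E) (w : V → ℕ) (S : Finset V) : ℤ :=
  ((G.edgesIn S).card : ℤ) - S.card + 1 + ∑ v ∈ S, (w v : ℤ)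

/-- The genus of the weighted multigraph. -/
def genus (G : Multigraph V E) (w : V → ℕ) : ℤ := G.genusOf w univ

/-- The valence of a vertex: the number of edge-ends at it (a loop counts twice). -/
def valence (G : Multigraph V E) (v : V) : ℕ :=
  (univ.filter fun e => G.fst e = v).card + (univ.filter fun e => G.snd e = v).card

/-- Adjacency via some edge. -/
def Adj (G : Multigraph V E) (a b : V) : Prop :=
  ∃ e, (G.fst e = a ∧ G.snd e = b) ∨ (G.fst e = b ∧ G.snd e = a)

/-- The multigraph is connected: nonempty, and any two vertices are joined by a path. -/
def Connected (G : Multigraph V E) : Prop :=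
  Nonempty V ∧ ∀ a b : V, Relation.ReflTransGen G.Adj a b

/-- Adjacency inside the induced subgraph on `S` (via an edge of `E(S)`). -/
def AdjOn (G : Multigraph V E) (S : Finset V) (a b : V) : Prop :=
  ∃ e, ((G.fst e = a ∧ G.snd e = b) ∨ (G.fst e = b ∧ G.snd e = a)) ∧
    G.fst e ∈ S ∧ G.snd e ∈ S

/-- The induced subgraph on `S` is connected. -/
def ConnectedOn (G : Multigraph V E) (S : Finset V) : Prop :=
  ∀ a ∈ S, ∀ b ∈ S, Relation.ReflTransGen (G.AdjOn S) a b

/-- The weighted multigraph is stable: connected, of genus at least 2, and every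
vertex of weight 0 has valence at least 3. -/
def IsStable (G : Multigraph V E) (w : V → ℕ) : Prop :=
  G.Connected ∧ 2 ≤ G.genus w ∧ ∀ v, w v = 0 → 3 ≤ G.valence v

/-- A multidegree `d : V → ℤ` of total degree `δ = ∑ v, d v` is semistable if for every
nonempty `S ⊆ V`:
`(2g-2)(g(S)-1) + (δ-g+1)(2g(S)-2+ε(S)) ≤ (2g-2) Σ_{v ∈ S} d v`. -/
def Semistable (G : Multigraph V E) (w : V → ℕ) (d : V → ℤ) : Prop :=
  ∀ S : Finset V, S.Nonempty →
    (2 * G.genus w - 2) * (G.genusOf w S - 1) +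
      ((∑ v, d v) - G.genus w + 1) * (2 * G.genusOf w S - 2 + (G.cutCard S : ℤ)) ≤
    (2 * G.genus w - 2) * ∑ v ∈ S, d v

/-- A multidegree is stable if it is semistable and the semistability inequality is
strict for every nonempty proper subset of vertices. -/
def StableDeg (G : Multigraph V E) (w : V → ℕ) (d : V → ℤ) : Prop :=
  G.Semistable w d ∧ ∀ S : Finset V, S.Nonempty → S ≠ univ →
    (2 * G.genus w - 2) * (G.genusOf w S - 1) +
      ((∑ v, d v) - G.genus w + 1) * (2 * G.genusOf w S - 2 + (G.cutCard S : ℤ)) <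
    (2 * G.genus w - 2) * ∑ v ∈ S, d v

/-- A multidegree is effective if it is nonnegative at every vertex. -/
def Effective (d : V → ℤ) : Prop := ∀ v, 0 ≤ d v

end Multigraph

namespace GraphOrientation

variable {G : Multigraph V E}

/-- The indegree of a vertex: the number of edges with head `v`. -/
def indeg (O : GraphOrientation G) (v : V) : ℕ :=
  (univ.filter fun e => O.head e = v).card

/-- The multidegree `d_O` associated to an orientation: `d_O(v) = g_v - 1 + indeg_O(v)`. -/
def multidegree (O : GraphOrientation G) (w : V → ℕ) : V → ℤ :=
  fun v => (w v : ℤ) - 1 + (O.indeg v : ℤ)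

/-- The edge `e₀` lies on a directed cycle of `O`: there are `k ≥ 1` distinct vertices
`vs` and distinct edges `es`, with `es i` directed from `vs i` to `vs (i+1)`,
one of the edges being `e₀`. -/
def EdgeInCycle (O : GraphOrientation G) (e₀ : E) : Prop :=
  ∃ (k : ℕ) (vs : Fin (k + 1) → V) (es : Fin (k + 1) → E),
    Function.Injective vs ∧ Function.Injective es ∧ (∃ i, es i = e₀) ∧
    ∀ i, O.tail (es i) = vs i ∧ O.head (es i) = vs (i + 1)

/-- The orientation contains a directed cycle. -/
def HasDirectedCycle (O : GraphOrientation G) : Prop :=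
  ∃ (k : ℕ) (vs : Fin (k + 1) → V) (es : Fin (k + 1) → E),
    Function.Injective vs ∧ Function.Injective es ∧
    ∀ i, O.tail (es i) = vs i ∧ O.head (es i) = vs (i + 1)

/-- The orientation is acyclic: it contains no directed cycle. -/
def Acyclic (O : GraphOrientation G) : Prop := ¬ O.HasDirectedCycle

/-- The orientation is totally cyclic: every edge lies on a directed cycle. -/
def TotallyCyclic (O : GraphOrientation G) : Prop := ∀ e, O.EdgeInCycle e

/-- The cut of `S` is directed towards `S`: every edge of the cut has its head in `S`. -/
def CutTowards (O : GraphOrientation G) (S : Finset V) : Prop :=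
  ∀ e, G.InCut S e → O.head e ∈ S

/-- The cut of `S` is directed away from `S`: every edge of the cut has its tail in `S`. -/
def CutAway (O : GraphOrientation G) (S : Finset V) : Prop :=
  ∀ e, G.InCut S e → O.tail e ∈ S

end GraphOrientation

/-- A multidegree of total degree `g - 1` on a stable weighted multigraph
is semistable iff it is orientable, i.e., `d = d_O` for some orientation `O`. -/
theorem semistable_degree_g_sub_one_iff_orientable
    (G : Multigraph V E) (w : V → ℕ) (hG : G.IsStable w) (d : V → ℤ)
    (hd : ∑ v, d v = G.genus w - 1) :
    G.Semistable w d ↔ ∃ O : GraphOrientation G, d = O.multidegree w := by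
  classical
  obtain ⟨hconn, hg2, hval⟩ := hG
  have hcoef : (∑ v, d v) - G.genus w + 1 = 0 := by rw [hd]; ring
  have hpos : (0:ℤ) < 2 * G.genus w - 2 := by linarith
  have hEuniv : G.edgesIn univ = (univ : Finset E) := by
    simp [Multigraph.edgesIn]
  have hgenus : G.genus w
      = (Fintype.card E : ℤ) - Fintype.card V + 1 + ∑ v, (w v : ℤ) := by
    unfold Multigraph.genus Multigraph.genusOf
    rw [hEuniv]
    simp [Finset.card_univ]
  constructor
  · intro hss
    -- key inequality: for nonempty S, |E(S)| + Σ w - |S| ≤ Σ d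
    have key : ∀ S : Finset V, S.Nonempty →
        ((G.edgesIn S).card : ℤ) + (∑ v ∈ S, (w v : ℤ)) - S.card ≤ ∑ v ∈ S, d v := by
      intro S hS
      have h := hss S hS
      rw [hcoef, zero_mul, add_zero] at h
      have h2 := le_of_mul_le_mul_left h hpos
      unfold Multigraph.genusOf at h2
      linarith
    set m : V → ℕ := fun v => (d v - w v + 1).toNat with hm
    have hmnn : ∀ v, (m v : ℤ) = d v - w v + 1 := by
      intro v
      have h1 := key {v} ⟨v, mem_singleton_self v⟩
      simp only [sum_singleton, card_singleton] at h1
      have hc : (0:ℤ) ≤ ((G.edgesIn {v}).card : ℤ) := Nat.cast_nonneg _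
      push_cast at h1
      exact Int.toNat_of_nonneg (by linarith)
    have hsum_m : ∑ v, (m v : ℤ) = Fintype.card E := by
      have : ∑ v, (m v : ℤ) = ∑ v, (d v - w v + 1) :=
        Finset.sum_congr rfl fun v _ => hmnn v
      rw [this, Finset.sum_add_distrib, Finset.sum_sub_distrib, Finset.sum_const,
        Finset.card_univ, nsmul_eq_mul, mul_one, hd, hgenus]
      ring
    -- Hall's theorem setup
    set slots : V → Finset (V × ℕ) :=
      fun v => (Finset.range (m v)).image fun i => (v, i) with hslots
    have hslots_card : ∀ v, (slots v).card = m v := by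
      intro v
      rw [hslots]
      rw [Finset.card_image_of_injective _ (fun a b h => by
        simpa using (Prod.mk.injEq v a v b).mp h |>.2), Finset.card_range]
    have hslots_disj : ∀ x : V, ∀ y : V, x ≠ y → Disjoint (slots x) (slots y) := by
      intro x y hxy
      rw [Finset.disjoint_left]
      intro a hax hay
      simp only [hslots, Finset.mem_image, Finset.mem_range] at hax hay
      obtain ⟨i, _, rfl⟩ := hax
      obtain ⟨j, _, hj⟩ := hay
      exact hxy ((Prod.mk.injEq _ _ _ _).mp hj).1.symm
    set t : E → Finset (V × ℕ) :=
      fun e => ({G.fst e, G.snd e} : Finset V).biUnion slots with ht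
    have hall : ∀ A : Finset E, A.card ≤ (A.biUnion t).card := by
      intro A
      rcases A.eq_empty_or_nonempty with rfl | hA
      · simp
      set S : Finset V := A.biUnion fun e => {G.fst e, G.snd e} with hS
      obtain ⟨e₀, he₀⟩ := hA
      have hSne : S.Nonempty :=
        ⟨G.fst e₀, Finset.mem_biUnion.mpr ⟨e₀, he₀, by simp⟩⟩
      have hbi : A.biUnion t = S.biUnion slots := by
        rw [hS, ht, Finset.biUnion_biUnion]
      have hcard : (A.biUnion t).card = ∑ v ∈ S, m v := by
        rw [hbi, Finset.card_biUnion (fun x _ y _ hxy => hslots_disj x y hxy)]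
        exact Finset.sum_congr rfl fun v _ => hslots_card v
      have hAsub : A ⊆ G.edgesIn S := by
        intro e he
        simp only [Multigraph.edgesIn, Finset.mem_filter, Finset.mem_univ, true_and]
        exact ⟨Finset.mem_biUnion.mpr ⟨e, he, by simp⟩,
               Finset.mem_biUnion.mpr ⟨e, he, by simp⟩⟩
      have h1 : (A.card : ℤ) ≤ ((G.edgesIn S).card : ℤ) := by
        exact_mod_cast Finset.card_le_card hAsub
      have h3 : ((G.edgesIn S).card : ℤ) ≤ ∑ v ∈ S, (m v : ℤ) := by
        have hms : ∑ v ∈ S, (m v : ℤ) = ∑ v ∈ S, (d v - w v + 1) :=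
          Finset.sum_congr rfl fun v _ => hmnn v
        rw [hms, Finset.sum_add_distrib, Finset.sum_sub_distrib, Finset.sum_const,
          nsmul_eq_mul, mul_one]
        have := key S hSne
        linarith
      rw [hcard]
      have hZ : (A.card : ℤ) ≤ ((∑ v ∈ S, m v : ℕ) : ℤ) := by
        push_cast
        exact h1.trans h3
      exact_mod_cast hZ
    obtain ⟨f, hfinj, hft⟩ := (Finset.all_card_le_biUnion_card_iff_exists_injective t).mp hall
    have hfe : ∀ e, ((f e).1 = G.fst e ∨ (f e).1 = G.snd e) ∧ (f e).2 < m (f e).1 := by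
      intro e
      have h := hft e
      simp only [ht, hslots, Finset.mem_biUnion, Finset.mem_insert, Finset.mem_singleton,
        Finset.mem_image, Finset.mem_range] at h
      obtain ⟨v, hv, i, hi, hvi⟩ := h
      exact ⟨by rw [← hvi]; simpa using hv, by rw [← hvi]; exact hi⟩
    let O : GraphOrientation G :=
      { head := fun e => (f e).1
        tail := fun e => if (f e).1 = G.fst e then G.snd e else G.fst e
        compat := fun e => by
          by_cases hfs : (f e).1 = G.fst e
          · exact Or.inr ⟨if_pos hfs, hfs⟩
          · rcases (hfe e).1 with h | h
            · exact absurd h hfs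
            · exact Or.inl ⟨if_neg hfs, h⟩ }
    have hindeg_le : ∀ v, O.indeg v ≤ m v := by
      intro v
      unfold GraphOrientation.indeg
      rw [← Finset.card_range (m v)]
      apply Finset.card_le_card_of_injOn (fun e => (f e).2)
      · intro e he
        simp only [Finset.mem_coe, Finset.mem_filter, Finset.mem_univ, true_and] at he
        have h2 := (hfe e).2
        have he' : (f e).1 = v := he
        exact Finset.mem_range.mpr (he' ▸ h2)
      · intro a ha b hb hab
        have ha' : (f a).1 = v := (Finset.mem_filter.mp (Finset.mem_coe.mp ha)).2
        have hb' : (f b).1 = v := (Finset.mem_filter.mp (Finset.mem_coe.mp hb)).2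
        exact hfinj (Prod.ext (ha'.trans hb'.symm) hab)
    have hsum_indeg : ∑ v, O.indeg v = Fintype.card E := by
      rw [← Finset.card_univ]
      exact (Finset.card_eq_sum_card_fiberwise
        (f := O.head) (t := univ) fun e _ => mem_univ _).symm
    have hms : ∑ v, m v = Fintype.card E := by
      have : ((∑ v, m v : ℕ) : ℤ) = (Fintype.card E : ℤ) := by push_cast; exact hsum_m
      exact_mod_cast this
    have heq := (Finset.sum_eq_sum_iff_of_le fun v _ => hindeg_le v).mp
      (hsum_indeg.trans hms.symm)
    refine ⟨O, funext fun v => ?_⟩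
    have h1 := hmnn v
    have h2 := heq v (mem_univ v)
    unfold GraphOrientation.multidegree
    rw [h2]
    linarith
  · rintro ⟨O, rfl⟩ S hS
    rw [hcoef, zero_mul, add_zero]
    apply mul_le_mul_of_nonneg_left _ (le_of_lt hpos)
    have hhead : ∀ e, O.head e = G.fst e ∨ O.head e = G.snd e := fun e =>
      (O.compat e).elim (fun h => Or.inr h.2) (fun h => Or.inl h.2)
    have h1 : (G.edgesIn S).card ≤ ∑ v ∈ S, O.indeg v := by
      have hdisj : ∀ x ∈ S, ∀ y ∈ S, x ≠ y →
          Disjoint (univ.filter fun e => O.head e = x)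
                   (univ.filter fun e => O.head e = y) := by
        intro x _ y _ hxy
        rw [Finset.disjoint_left]
        intro e he1 he2
        simp only [Finset.mem_filter] at he1 he2
        exact hxy (he1.2.symm.trans he2.2)
      have hcb : ∑ v ∈ S, O.indeg v
          = (S.biUnion fun v => univ.filter fun e => O.head e = v).card :=
        (Finset.card_biUnion hdisj).symm
      rw [hcb]
      apply Finset.card_le_card
      intro e he
      simp only [Multigraph.edgesIn, Finset.mem_filter, Finset.mem_univ, true_and] at he
      apply Finset.mem_biUnion.mpr
      refine ⟨O.head e, ?_, by simp⟩
      rcases hhead e with h | h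
      · rw [h]; exact he.1
      · rw [h]; exact he.2
    have hsum : ∑ v ∈ S, O.multidegree w v
        = (∑ v ∈ S, (w v : ℤ)) - S.card + ∑ v ∈ S, (O.indeg v : ℤ) := by
      unfold GraphOrientation.multidegree
      rw [Finset.sum_add_distrib, Finset.sum_sub_distrib, Finset.sum_const,
        nsmul_eq_mul, mul_one]
    rw [hsum]
    unfold Multigraph.genusOf
    have h1' : ((G.edgesIn S).card : ℤ) ≤ ∑ v ∈ S, (O.indeg v : ℤ) := by
      exact_mod_cast h1
    linarith
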